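/- Let P be a poset and I, J proper intervals of P. Then I left divides J in the interval monoid Int(P) if and only if I and J have the same source and the target of I is ≤ the target of J; and I right divides J in Int(P) if and only if I and J have the same target and the source of I is ≥ the source of J. -/

import Mathlib

/-! Common definitions: multifractions, divisibility, interval monoids, zigzags. -/

section Defs

variable {M : Type*}

/-- A multifraction on a monoid `M`: a finite sequence with entries alternately in `M`
(sign `true`) and in a formal disjoint copy of `M` (sign `false`). -/
structure Multifraction (M : Type*) [Monoid M] where
  entries : List (Bool × M)
  alt : entries.Chain' fun p q => p.1 ≠ q.1

/-- The product of two multifraction entry lists: merge the adjacent entries when they have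
the same sign, concatenate otherwise. -/
def mfMul [Monoid M] (l₁ l₂ : List (Bool × M)) : List (Bool × M) :=
  match l₁.getLast?, l₂ with
  | some (b, x), (c, y) :: t =>
      if b = c then l₁.dropLast ++ (b, if b then x * y else y * x) :: t else l₁ ++ l₂
  | _, _ => l₁ ++ l₂

/-- The one-entry positive multifraction. -/
def mfPos [Monoid M] (x : M) : Multifraction M := ⟨[(true, x)], List.isChain_singleton _⟩

/-- The one-entry negative multifraction. -/
def mfNeg [Monoid M] (x : M) : Multifraction M := ⟨[(false, x)], List.isChain_singleton _⟩

/-- `a` left divides `b`. -/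
def LDvd [Monoid M] (a b : M) : Prop := ∃ c, a * c = b

/-- `a` right divides `b`. -/
def RDvd [Monoid M] (a b : M) : Prop := ∃ c, c * a = b

/-- `M` is (left and right) cancellative. -/
def Cancellative (M : Type*) [Monoid M] : Prop :=
  (∀ a b c : M, a * b = a * c → b = c) ∧ (∀ a b c : M, b * a = c * a → b = c)

/-- `1` is the only invertible element of `M`. -/
def TrivialUnits (M : Type*) [Monoid M] : Prop := ∀ a : M, IsUnit a → a = 1

/-- Any two elements admit a left gcd. -/
def HasLeftGcds (M : Type*) [Monoid M] : Prop :=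
  ∀ a b : M, ∃ d, LDvd d a ∧ LDvd d b ∧ ∀ e, LDvd e a → LDvd e b → LDvd e d

/-- Any two elements admit a right gcd. -/
def HasRightGcds (M : Type*) [Monoid M] : Prop :=
  ∀ a b : M, ∃ d, RDvd d a ∧ RDvd d b ∧ ∀ e, RDvd e a → RDvd e b → RDvd e d

/-- `M` is a gcd-monoid. -/
def GcdMonoidProp (M : Type*) [Monoid M] : Prop :=
  Cancellative M ∧ TrivialUnits M ∧ HasLeftGcds M ∧ HasRightGcds M

/-- `m` is a right lcm of `u` and `v`. -/
def IsRightLcm [Monoid M] (u v m : M) : Prop :=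
  LDvd u m ∧ LDvd v m ∧ ∀ w, LDvd u w → LDvd v w → LDvd m w

/-- `m` is a left lcm of `u` and `v`. -/
def IsLeftLcm [Monoid M] (u v m : M) : Prop :=
  RDvd u m ∧ RDvd v m ∧ ∀ w, RDvd u w → RDvd v w → RDvd m w

/-- `M` is a noetherian monoid: cancellative, with trivial units, and with well-founded
proper left and right divisibility. -/
def NoetherianMonoid (M : Type*) [Monoid M] : Prop :=
  Cancellative M ∧ TrivialUnits M ∧
    WellFounded (fun a b : M => LDvd a b ∧ a ≠ b) ∧
    WellFounded (fun a b : M => RDvd a b ∧ a ≠ b)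

/-- An atom of a monoid. -/
def MonAtom [Monoid M] (a : M) : Prop :=
  a ≠ 1 ∧ ∀ b c : M, a = b * c → b = 1 ∨ c = 1

/-- `η : M →* G` exhibits `G` as the enveloping (universal) group of `M`. -/
def IsEnvelopingGroup (M : Type*) [Monoid M] (G : Type*) [Group G] (η : M →* G) : Prop :=
  ∀ (H : Type*) [Group H] (f : M →* H), ∃! g : G →* H, g.comp η = f

/-- Evaluation of a multifraction in a group `G` through `η : M →* G`. -/
def mfEval [Monoid M] {G : Type*} [Group G] (η : M →* G) (a : Multifraction M) : G :=
  (a.entries.map fun p => if p.1 then η p.2 else (η p.2)⁻¹).prod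

/-- A multifraction is trivial if all its entries equal `1`. -/
def MfTrivial [Monoid M] (a : Multifraction M) : Prop := ∀ p ∈ a.entries, p.2 = 1

/-- `a` is a proper piece of `b` (relative to a monoid structure on multifractions). -/
def Piece [Monoid M] [Monoid (Multifraction M)] (a b : Multifraction M) : Prop :=
  ∃ c d : Multifraction M, b = c * a * d ∧ ¬(MfTrivial c ∧ MfTrivial d)

/-- The `j`-th entry of a multifraction (with default `(true, 1)`). -/
def mfEntry [Monoid M] (a : Multifraction M) (j : ℕ) : Bool × M :=
  (a.entries[j]?).getD (true, 1)

/-- The reduction rule `R_{i,x}` (here `j = i - 1` is the 0-based level):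
`b = a • R_{i,x}`. -/
def RedAt [Monoid M] (a b : Multifraction M) (j : ℕ) (x : M) : Prop :=
  b.entries.length = a.entries.length ∧ j + 1 < a.entries.length ∧
  (∀ k, ¬(j - 1 ≤ k ∧ k ≤ j + 1) → b.entries[k]? = a.entries[k]?) ∧
  (∀ k, (mfEntry b k).1 = (mfEntry a k).1) ∧
  (if (mfEntry a j).1 then
     if j = 0 then
       (mfEntry b 0).2 * x = (mfEntry a 0).2 ∧ (mfEntry b 1).2 * x = (mfEntry a 1).2
     else ∃ x' : M,
       (mfEntry b (j - 1)).2 = x' * (mfEntry a (j - 1)).2 ∧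
       (mfEntry b j).2 * x = x' * (mfEntry a j).2 ∧
       IsLeftLcm x (mfEntry a j).2 ((mfEntry b j).2 * x) ∧
       (mfEntry b (j + 1)).2 * x = (mfEntry a (j + 1)).2
   else
     if j = 0 then
       x * (mfEntry b 0).2 = (mfEntry a 0).2 ∧ x * (mfEntry b 1).2 = (mfEntry a 1).2
     else ∃ x' : M,
       (mfEntry b (j - 1)).2 = (mfEntry a (j - 1)).2 * x' ∧
       x * (mfEntry b j).2 = (mfEntry a j).2 * x' ∧
       IsRightLcm x (mfEntry a j).2 (x * (mfEntry b j).2) ∧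
       x * (mfEntry b (j + 1)).2 = (mfEntry a (j + 1)).2)

/-- One reduction step. -/
def Reduces [Monoid M] (a b : Multifraction M) : Prop := ∃ j x, x ≠ 1 ∧ RedAt a b j x

/-- A multifraction is reducible if some rule `R_{i,x}` with `x ≠ 1` applies to it. -/
def Reducible [Monoid M] (a : Multifraction M) : Prop := ∃ b, Reduces a b

/-- Iterated reduction. -/
def ReducesStar [Monoid M] : Multifraction M → Multifraction M → Prop :=
  Relation.ReflTransGen Reduces

/-- Semi-convergence of reduction (relative to an enveloping group `η : M →* G`):
every unital multifraction reduces to a trivial one. -/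
def SemiConvergent [Monoid M] {G : Type*} [Group G] (η : M →* G) : Prop :=
  ∀ a : Multifraction M, mfEval η a = 1 → ∃ b, ReducesStar a b ∧ MfTrivial b

end Defs

section Interval

variable (P : Type*) [PartialOrder P]

/-- The intervals of a poset `P`. -/
def Iv := {p : P × P // p.1 ≤ p.2}

/-- The defining relations of the interval monoid of `P`. -/
def intervalRel : FreeMonoid (Iv P) → FreeMonoid (Iv P) → Prop := fun u v =>
  (∃ (x y z : P) (hxy : x ≤ y) (hyz : y ≤ z),
      u = FreeMonoid.of ⟨(x, z), hxy.trans hyz⟩ ∧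
      v = FreeMonoid.of ⟨(x, y), hxy⟩ * FreeMonoid.of ⟨(y, z), hyz⟩) ∨
  (∃ x : P, u = FreeMonoid.of ⟨(x, x), le_refl x⟩ ∧ v = 1)

/-- The interval monoid of the poset `P`. -/
def IntervalMonoid := (conGen (intervalRel P)).Quotient

instance : Monoid (IntervalMonoid P) :=
  inferInstanceAs (Monoid (conGen (intervalRel P)).Quotient)

variable {P}

/-- The generator `[x, y]` of the interval monoid. -/
def intv (I : Iv P) : IntervalMonoid P := (conGen (intervalRel P)).mk' (FreeMonoid.of I)

variable (P)

/-- `P` is a local lattice: each `P^{≥ x}` is a meet-semilattice and each `P^{≤ x}` is a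
join-semilattice. -/
def LocalLattice : Prop :=
  (∀ x a b : P, x ≤ a → x ≤ b →
      ∃ m, x ≤ m ∧ m ≤ a ∧ m ≤ b ∧ ∀ c, x ≤ c → c ≤ a → c ≤ b → c ≤ m) ∧
  (∀ x a b : P, a ≤ x → b ≤ x →
      ∃ m, m ≤ x ∧ a ≤ m ∧ b ≤ m ∧ ∀ c, c ≤ x → a ≤ c → b ≤ c → m ≤ c)

/-- Noetherianity conditions on the poset `P`: no infinite descending chain in any `P^{≥ x}`
and no infinite ascending chain in any `P^{≤ x}`. -/
def PosetNoethCond : Prop :=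
  ∀ x : P, WellFounded (fun a b : {y : P // x ≤ y} => (a : P) < (b : P)) ∧
    WellFounded (fun a b : {y : P // y ≤ x} => (b : P) < (a : P))

variable {P}

/-- A simple multifraction on the interval monoid: each entry is a proper interval, and
consecutive entries share their target (at positive positions) or source (at negative ones). -/
def MfSimple (a : Multifraction (IntervalMonoid P)) : Prop :=
  ∃ l : List (Bool × Iv P),
    a.entries = l.map (fun p => (p.1, intv p.2)) ∧
    (∀ p ∈ l, p.2.1.1 ≠ p.2.1.2) ∧
    l.Chain' fun p q => if p.1 then p.2.1.2 = q.2.1.2 else p.2.1.1 = q.2.1.1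

/-- A positive `n`-zigzag in `P`. -/
def PosZigzag (n : ℕ) (x : ℕ → P) : Prop :=
  ∀ i ≤ n, i % 2 = 0 → (1 ≤ i → x i < x (i - 1)) ∧ (i < n → x i < x (i + 1))

/-- A negative `n`-zigzag in `P`. -/
def NegZigzag (n : ℕ) (x : ℕ → P) : Prop :=
  ∀ i ≤ n, i % 2 = 1 → (1 ≤ i → x i < x (i - 1)) ∧ (i < n → x i < x (i + 1))

/-- The zigzag `x` is simple: `x₁, ..., xₙ` are pairwise distinct. -/
def SimpleZz (n : ℕ) (x : ℕ → P) : Prop :=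
  ∀ i j, 1 ≤ i → i < j → j ≤ n → x i ≠ x j

/-- Reducibility of a zigzag at level `i`. -/
def ZzRedAt (n : ℕ) (x : ℕ → P) (i : ℕ) : Prop :=
  1 ≤ i ∧ i < n ∧
  ((2 ≤ i ∧ x i < x (i + 1) ∧
      ∃ y, x i < y ∧ y ≤ x (i + 1) ∧ ∃ u, x (i - 1) ≤ u ∧ y ≤ u) ∨
   (2 ≤ i ∧ x (i + 1) < x i ∧
      ∃ y, x (i + 1) ≤ y ∧ y < x i ∧ ∃ u, u ≤ x (i - 1) ∧ u ≤ y) ∨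
   (i = 1 ∧ x 0 < x 1 ∧ ∃ y, x 0 ≤ y ∧ y < x 1 ∧ x 2 ≤ y) ∨
   (i = 1 ∧ x 1 < x 0 ∧ ∃ y, x 1 < y ∧ y ≤ x 0 ∧ y ≤ x 2))

/-- A zigzag is reducible if it is reducible at some level. -/
def ZzReducible (n : ℕ) (x : ℕ → P) : Prop := ∃ i, ZzRedAt n x i

/-- The multifraction `a` is the image of the positive `n`-zigzag `x` under the map `F`. -/
def PosImage (n : ℕ) (x : ℕ → P) (a : Multifraction (IntervalMonoid P)) : Prop :=
  a.entries.length = n ∧ ∀ j < n,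
    if j % 2 = 0 then
      ∃ h : x j ≤ x (j + 1), a.entries[j]? = some (true, intv ⟨(x j, x (j + 1)), h⟩)
    else
      ∃ h : x (j + 1) ≤ x j, a.entries[j]? = some (false, intv ⟨(x (j + 1), x j), h⟩)

/-- The multifraction `a` is the image of the negative `n`-zigzag `x` under the map `F`. -/
def NegImage (n : ℕ) (x : ℕ → P) (a : Multifraction (IntervalMonoid P)) : Prop :=
  a.entries.length = n ∧ ∀ j < n,
    if j % 2 = 0 then
      ∃ h : x (j + 1) ≤ x j, a.entries[j]? = some (false, intv ⟨(x (j + 1), x j), h⟩)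
    else
      ∃ h : x j ≤ x (j + 1), a.entries[j]? = some (true, intv ⟨(x j, x (j + 1)), h⟩)

end Interval


section NormalForm

variable {P : Type*} [PartialOrder P]

open Classical in
/-- Auxiliary normal-form multiplication: concatenate, merging composable junctions. -/
noncomputable def pmul (l₁ l₂ : List (P × P)) : List (P × P) :=
  match l₁.getLast?, l₂ with
  | some a, b :: t => if a.2 = b.1 then l₁.dropLast ++ (a.1, b.2) :: t else l₁ ++ l₂
  | _, _ => l₁ ++ l₂

theorem pmul_nil (l : List (P × P)) : pmul l [] = l := by
  unfold pmul; cases h : l.getLast? <;> simp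

theorem nil_pmul (l : List (P × P)) : pmul [] l = l := by
  unfold pmul; cases l <;> simp

open Classical in
theorem concat_pmul_cons (l : List (P × P)) (e d : P × P) (s : List (P × P)) :
    pmul (l ++ [e]) (d :: s) =
      if e.2 = d.1 then l ++ (e.1, d.2) :: s else (l ++ [e]) ++ d :: s := by
  unfold pmul
  simp [List.getLast?_concat, List.dropLast_concat]

open Classical in
theorem single_pmul_cons (a b : P × P) (t : List (P × P)) :
    pmul [a] (b :: t) = if a.2 = b.1 then (a.1, b.2) :: t else a :: b :: t := by
  simpa using concat_pmul_cons [] a b t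

open Classical in
theorem pair_pmul_cons (a b d : P × P) (s : List (P × P)) :
    pmul [a, b] (d :: s) = if b.2 = d.1 then a :: (b.1, d.2) :: s else a :: b :: d :: s := by
  simpa using concat_pmul_cons [a] b d s

theorem cons_concat_pmul (a : P × P) (l : List (P × P)) (e d : P × P) (s : List (P × P)) :
    pmul ((a :: l) ++ [e]) (d :: s) = a :: pmul (l ++ [e]) (d :: s) := by
  classical
  rw [concat_pmul_cons (a :: l) e d s, concat_pmul_cons l e d s]
  split_ifs <;> simp

theorem pmul_single_assoc (a : P × P) (l₂ l₃ : List (P × P)) :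
    pmul [a] (pmul l₂ l₃) = pmul (pmul [a] l₂) l₃ := by
  classical
  rcases l₂ with _ | ⟨b, t⟩
  · rw [nil_pmul, pmul_nil]
  rcases l₃ with _ | ⟨d, s⟩
  · rw [pmul_nil, pmul_nil]
  rcases List.eq_nil_or_concat t with rfl | ⟨ys, e, rfl⟩
  · rw [single_pmul_cons b d s, single_pmul_cons a b []]
    split_ifs with h2 h1 h1 <;>
      simp [single_pmul_cons, pair_pmul_cons, h1, h2]
  · simp only [List.concat_eq_append]
    have L1 : pmul (b :: (ys ++ [e])) (d :: s) = b :: pmul (ys ++ [e]) (d :: s) :=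
      cons_concat_pmul b ys e d s
    rw [L1, single_pmul_cons a b (pmul (ys ++ [e]) (d :: s)),
      single_pmul_cons a b (ys ++ [e])]
    split_ifs with h2
    · exact (cons_concat_pmul (a.1, b.2) ys e d s).symm
    · have h3 := cons_concat_pmul a (b :: ys) e d s
      rw [show ((a :: b :: ys) ++ [e] : List (P × P)) = a :: b :: (ys ++ [e]) by simp] at h3
      rw [h3, cons_concat_pmul b ys e d s]

theorem pmul_good {l₁ l₂ : List (P × P)} (h₁ : ∀ p ∈ l₁, p.1 ≤ p.2)
    (h₂ : ∀ p ∈ l₂, p.1 ≤ p.2) : ∀ p ∈ pmul l₁ l₂, p.1 ≤ p.2 := by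
  classical
  rcases List.eq_nil_or_concat l₁ with rfl | ⟨ys, e, rfl⟩
  · rw [nil_pmul]; exact h₂
  rcases l₂ with _ | ⟨b, t⟩
  · rw [pmul_nil]; exact h₁
  simp only [List.concat_eq_append] at h₁ ⊢
  rw [concat_pmul_cons]
  split_ifs with h
  · intro p hp
    rcases List.mem_append.1 hp with hp | hp
    · exact h₁ p (List.mem_append.2 (Or.inl hp))
    · rcases List.mem_cons.1 hp with rfl | hp
      · exact le_trans (h₁ e (by simp)) (h ▸ h₂ b (by simp))
      · exact h₂ p (List.mem_cons_of_mem _ hp)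
  · intro p hp
    rcases List.mem_append.1 hp with hp | hp
    · exact h₁ p hp
    · exact h₂ p hp

open Classical in
/-- The normal form of a single interval generator. -/
noncomputable def toN (K : Iv P) : List (P × P) :=
  if K.1.1 = K.1.2 then [] else [K.1]

/-- The normal form of a word over interval generators. -/
noncomputable def nfL : List (Iv P) → List (P × P)
  | [] => []
  | K :: t => pmul (toN K) (nfL t)

theorem toN_good (K : Iv P) : ∀ p ∈ toN K, p.1 ≤ p.2 := by
  classical
  unfold toN
  split_ifs <;> simp_all [K.2]

theorem nfL_good (w : List (Iv P)) : ∀ p ∈ nfL w, p.1 ≤ p.2 := by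
  induction w with
  | nil => simp [nfL]
  | cons K t ih => exact pmul_good (toN_good K) ih

theorem nfL_append (u v : List (Iv P)) : nfL (u ++ v) = pmul (nfL u) (nfL v) := by
  classical
  induction u with
  | nil => rw [List.nil_append, nfL, nil_pmul]
  | cons K u ih =>
      show pmul (toN K) (nfL (u ++ v)) = pmul (pmul (toN K) (nfL u)) (nfL v)
      rw [ih]
      unfold toN
      split_ifs with h
      · rw [nil_pmul, nil_pmul]
      · exact pmul_single_assoc _ _ _

/-- The normal form of an element of the free monoid over intervals. -/
noncomputable def nf (w : FreeMonoid (Iv P)) : List (P × P) := nfL (FreeMonoid.toList w)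

theorem nf_mul (u v : FreeMonoid (Iv P)) : nf (u * v) = pmul (nf u) (nf v) := by
  unfold nf
  rw [FreeMonoid.toList_mul, nfL_append]

theorem nf_of (K : Iv P) : nf (FreeMonoid.of K) = toN K := by
  show nfL [K] = toN K
  rw [nfL, nfL, pmul_nil]

theorem nf_one : nf (1 : FreeMonoid (Iv P)) = [] := rfl

theorem nf_good (w : FreeMonoid (Iv P)) : ∀ p ∈ nf w, p.1 ≤ p.2 := nfL_good _

variable (P)

/-- The congruence of having equal normal forms. -/
noncomputable def nfCon : Con (FreeMonoid (Iv P)) where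
  r u v := nf u = nf v
  iseqv := ⟨fun _ => rfl, Eq.symm, Eq.trans⟩
  mul' := fun {w x y z} h1 h2 => by
    show nf (w * y) = nf (x * z)
    rw [nf_mul, nf_mul, h1, h2]

theorem conGen_le_nfCon : conGen (intervalRel P) ≤ nfCon P := by
  classical
  apply Con.conGen_le.2
  rintro u v (⟨x, y, z, hxy, hyz, rfl, rfl⟩ | ⟨x, rfl, rfl⟩)
  · show nf _ = nf _
    rw [nf_of (⟨(x, z), hxy.trans hyz⟩ : Iv P), nf_mul, nf_of (⟨(x, y), hxy⟩ : Iv P),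
      nf_of (⟨(y, z), hyz⟩ : Iv P)]
    by_cases h1 : x = y
    · cases h1
      rw [show toN (⟨(x, x), hxy⟩ : Iv P) = [] from if_pos rfl, nil_pmul]
    · by_cases h2 : y = z
      · cases h2
        rw [show toN (⟨(y, y), hyz⟩ : Iv P) = [] from if_pos rfl, pmul_nil]
      · have hxz : x ≠ z := by
          intro h
          cases h
          exact h1 (le_antisymm hxy hyz)
        rw [show toN (⟨(x, y), hxy⟩ : Iv P) = [(x, y)] from if_neg h1,
          show toN (⟨(y, z), hyz⟩ : Iv P) = [(y, z)] from if_neg h2,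
          show toN (⟨(x, z), hxy.trans hyz⟩ : Iv P) = [(x, z)] from if_neg hxz,
          single_pmul_cons, if_pos rfl]
  · show nf _ = nf _
    rw [nf_of (⟨(x, x), le_refl x⟩ : Iv P), nf_one, show toN (⟨(x, x), le_refl x⟩ : Iv P) = [] from if_pos rfl]

end NormalForm


theorem con_mk'_eq_iff {M : Type*} [Monoid M] (c : Con M) (u v : M) :
    c.mk' u = c.mk' v ↔ c u v := c.eq

theorem rel_conGen {M : Type*} [Monoid M] {r : M → M → Prop} {u v : M}
    (h : ConGen.Rel r u v) : conGen r u v := h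

/-- Divisibility between proper intervals in the interval monoid: `I` left divides `J` iff
they share their source and the target of `I` is below that of `J`; symmetrically for right
divisibility. -/
theorem intervalMonoid_interval_dvd (P : Type*) [PartialOrder P] (I J : Iv P)
    (hI : I.1.1 ≠ I.1.2) (hJ : J.1.1 ≠ J.1.2) :
    (LDvd (intv I) (intv J) ↔ I.1.1 = J.1.1 ∧ I.1.2 ≤ J.1.2) ∧
    (RDvd (intv I) (intv J) ↔ I.1.2 = J.1.2 ∧ J.1.1 ≤ I.1.1) := by
  classical
  obtain ⟨⟨a, b⟩, hab⟩ := I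
  obtain ⟨⟨c, d⟩, hcd⟩ := J
  simp only at hI hJ ⊢
  constructor
  · constructor
    · rintro ⟨e, he⟩
      obtain ⟨w, rfl⟩ := Con.mk'_surjective e
      have h0 : (conGen (intervalRel P)).mk' (FreeMonoid.of (α := Iv P) ⟨(a, b), hab⟩ * w) =
          (conGen (intervalRel P)).mk' (FreeMonoid.of (α := Iv P) ⟨(c, d), hcd⟩) := by
        rw [map_mul]; exact he
      have h1 : nf (FreeMonoid.of (α := Iv P) ⟨(a, b), hab⟩ * w) =
          nf (FreeMonoid.of (α := Iv P) ⟨(c, d), hcd⟩) :=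
        conGen_le_nfCon P ((con_mk'_eq_iff _ _ _).mp h0)
      rw [nf_mul, nf_of (⟨(a, b), hab⟩ : Iv P), nf_of (⟨(c, d), hcd⟩ : Iv P),
        show toN (⟨(a, b), hab⟩ : Iv P) = [(a, b)] from if_neg hI,
        show toN (⟨(c, d), hcd⟩ : Iv P) = [(c, d)] from if_neg hJ] at h1
      rcases hl : nf w with _ | ⟨p, t⟩
      · rw [hl, pmul_nil] at h1
        obtain ⟨h2, h3⟩ : a = c ∧ b = d := by simpa using h1
        exact ⟨h2, h3.le⟩
      · rw [hl, single_pmul_cons] at h1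
        split_ifs at h1 with h
        · have hp : p.1 ≤ p.2 := nf_good w p (hl ▸ List.mem_cons_self (a := p) (l := t))
          obtain ⟨⟨h2, h3⟩, -⟩ : (a = c ∧ p.2 = d) ∧ t = [] := by simpa using h1
          refine ⟨h2, ?_⟩
          have hb : b = p.1 := h
          rw [hb]
          exact hp.trans h3.le
        · simp at h1
    · rintro ⟨h1, h2⟩
      cases h1
      refine ⟨intv ⟨(b, d), h2⟩, ?_⟩
      have key : (conGen (intervalRel P)).mk'
            (FreeMonoid.of (α := Iv P) ⟨(a, b), hab⟩ * FreeMonoid.of (α := Iv P) ⟨(b, d), h2⟩) =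
          (conGen (intervalRel P)).mk' (FreeMonoid.of (α := Iv P) ⟨(a, d), hcd⟩) :=
        (con_mk'_eq_iff _ _ _).mpr (rel_conGen (ConGen.Rel.symm
          (ConGen.Rel.of _ _ (Or.inl ⟨a, b, d, hab, h2, rfl, rfl⟩))))
      rw [map_mul] at key
      exact key
  · constructor
    · rintro ⟨e, he⟩
      obtain ⟨w, rfl⟩ := Con.mk'_surjective e
      have h0 : (conGen (intervalRel P)).mk' (w * FreeMonoid.of (α := Iv P) ⟨(a, b), hab⟩) =
          (conGen (intervalRel P)).mk' (FreeMonoid.of (α := Iv P) ⟨(c, d), hcd⟩) := by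
        rw [map_mul]; exact he
      have h1 : nf (w * FreeMonoid.of (α := Iv P) ⟨(a, b), hab⟩) =
          nf (FreeMonoid.of (α := Iv P) ⟨(c, d), hcd⟩) :=
        conGen_le_nfCon P ((con_mk'_eq_iff _ _ _).mp h0)
      rw [nf_mul, nf_of (⟨(a, b), hab⟩ : Iv P), nf_of (⟨(c, d), hcd⟩ : Iv P),
        show toN (⟨(a, b), hab⟩ : Iv P) = [(a, b)] from if_neg hI,
        show toN (⟨(c, d), hcd⟩ : Iv P) = [(c, d)] from if_neg hJ] at h1
      rcases List.eq_nil_or_concat (nf w) with hl | ⟨ys, p, hl⟩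
      · rw [hl, nil_pmul] at h1
        obtain ⟨h2, h3⟩ : a = c ∧ b = d := by simpa using h1
        exact ⟨h3, h2.ge⟩
      · rw [hl] at h1
        simp only [List.concat_eq_append] at h1
        rw [concat_pmul_cons] at h1
        split_ifs at h1 with h
        · have hp : p.1 ≤ p.2 := nf_good w p (by rw [hl]; simp)
          rcases ys with _ | ⟨q, ys⟩
          · obtain ⟨h2, h3⟩ : p.1 = c ∧ b = d := by simpa using h1
            refine ⟨h3, ?_⟩
            rw [← h2]
            exact hp.trans h.le
          · simp at h1
        · have := congrArg List.length h1
          simp at this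
    · rintro ⟨h1, h2⟩
      cases h1
      refine ⟨intv ⟨(c, a), h2⟩, ?_⟩
      have key : (conGen (intervalRel P)).mk'
            (FreeMonoid.of (α := Iv P) ⟨(c, a), h2⟩ * FreeMonoid.of (α := Iv P) ⟨(a, b), hab⟩) =
          (conGen (intervalRel P)).mk' (FreeMonoid.of (α := Iv P) ⟨(c, b), hcd⟩) :=
        (con_mk'_eq_iff _ _ _).mpr (rel_conGen (ConGen.Rel.symm
          (ConGen.Rel.of _ _ (Or.inl ⟨c, a, b, h2, hab, rfl, rfl⟩))))
      rw [map_mul] at key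
      exact key
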